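/- In any finite simple undirected graph G, with n_i denoting the number of induced 4-node subgraphs isomorphic to the i-th 4-node motif (M_2 = 3-star, M_4 = paw (triangle plus pendant edge), M_5 = diamond (K_4 minus an edge), M_6 = K_4), the identity Σ_{v∈V} C(d_v, 3) = n_2 + n_4 + 2 n_5 + 4 n_6 holds. -/

import Mathlib

open SimpleGraph

/-- The 3-star `K_{1,3}` (motif `M₂`). -/
def star3 : SimpleGraph (Fin 4) := fromEdgeSet {s(0, 1), s(0, 2), s(0, 3)}

/-- The paw: a triangle `0,1,2` plus pendant edge `0-3` (motif `M₄`). -/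
def paw : SimpleGraph (Fin 4) := fromEdgeSet {s(0, 1), s(0, 2), s(1, 2), s(0, 3)}

/-- The diamond: `K₄` minus the edge `2-3` (motif `M₅`). -/
def diamond : SimpleGraph (Fin 4) :=
  fromEdgeSet {s(0, 1), s(0, 2), s(0, 3), s(1, 2), s(1, 3)}

/-- The number of 4-element vertex subsets of `G` whose induced subgraph is
isomorphic to the motif `M`. -/
noncomputable def inducedCount {V : Type*} [Fintype V] [DecidableEq V]
    (G : SimpleGraph V) (M : SimpleGraph (Fin 4)) : ℕ :=
  Nat.card {S : Finset V // S.card = 4 ∧ Nonempty (G.induce (S : Set V) ≃g M)}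

open Finset

lemma star3_adj (a b : Fin 4) : star3.Adj a b ↔
    (s(a,b) = s(0,1) ∨ s(a,b) = s(0,2) ∨ s(a,b) = s(0,3)) ∧ a ≠ b := by
  simp [star3, fromEdgeSet_adj]
lemma paw_adj (a b : Fin 4) : paw.Adj a b ↔
    (s(a,b) = s(0,1) ∨ s(a,b) = s(0,2) ∨ s(a,b) = s(1,2) ∨ s(a,b) = s(0,3)) ∧ a ≠ b := by
  simp [paw, fromEdgeSet_adj]
lemma diamond_adj (a b : Fin 4) : diamond.Adj a b ↔
    (s(a,b) = s(0,1) ∨ s(a,b) = s(0,2) ∨ s(a,b) = s(0,3) ∨ s(a,b) = s(1,2) ∨ s(a,b) = s(1,3)) ∧ a ≠ b := by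
  simp [diamond, fromEdgeSet_adj]

instance : DecidableRel star3.Adj := fun a b => decidable_of_iff _ (star3_adj a b).symm
instance : DecidableRel paw.Adj := fun a b => decidable_of_iff _ (paw_adj a b).symm
instance : DecidableRel diamond.Adj := fun a b => decidable_of_iff _ (diamond_adj a b).symm

/-- number of dominating vertices -/
def domCount {W : Type*} [Fintype W] [DecidableEq W] (H : SimpleGraph W) [DecidableRel H.Adj] : ℕ :=
  (univ.filter (fun v => ∀ w, w ≠ v → H.Adj v w)).card

lemma domCount_congr {W W' : Type*} [Fintype W] [DecidableEq W] [Fintype W'] [DecidableEq W']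
    {H : SimpleGraph W} {H' : SimpleGraph W'} [DecidableRel H.Adj] [DecidableRel H'.Adj]
    (f : H ≃g H') : domCount H = domCount H' := by
  unfold domCount
  apply Finset.card_nbij' (i := fun v => f v) (j := fun v => f.symm v)
  · intro v hv
    simp only [Finset.mem_coe, mem_filter, mem_univ, true_and] at hv ⊢
    intro w hw
    have h1 : H.Adj v (f.symm w) := hv _ (fun h => hw (by rw [← h]; simp))
    rw [← f.map_rel_iff] at h1
    simpa using h1
  · intro v hv
    simp only [Finset.mem_coe, mem_filter, mem_univ, true_and] at hv ⊢
    intro w hw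
    rw [← f.map_rel_iff]
    simp only [RelIso.apply_symm_apply]
    exact hv _ (fun h => hw (by rw [← h]; simp))
  · intro v _; simp
  · intro v _; simp

lemma domCount_star3 : domCount star3 = 1 := by decide
lemma domCount_paw : domCount paw = 1 := by decide
lemma domCount_diamond : domCount diamond = 2 := by decide
lemma domCount_top : domCount (⊤ : SimpleGraph (Fin 4)) = 4 := by decide

lemma edge_star3 : #star3.edgeFinset = 3 := by decide
lemma edge_paw : #paw.edgeFinset = 4 := by decide
lemma edge_diamond : #diamond.edgeFinset = 5 := by decide
lemma edge_top : #(⊤ : SimpleGraph (Fin 4)).edgeFinset = 6 := by decide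

lemma iso_nonempty_of_pointwise {H M : SimpleGraph (Fin 4)} (e : Equiv.Perm (Fin 4))
    (h : ∀ a b, M.Adj (e a) (e b) ↔ H.Adj a b) : Nonempty (H ≃g M) :=
  ⟨⟨e, @fun a b => h a b⟩⟩

lemma exists_iso_of_dom0 (H : SimpleGraph (Fin 4)) [DecidableRel H.Adj]
    (h0 : ∀ w, w ≠ 0 → H.Adj 0 w) :
    Nonempty (H ≃g star3) ∨ Nonempty (H ≃g paw) ∨ Nonempty (H ≃g diamond) ∨
      Nonempty (H ≃g (⊤ : SimpleGraph (Fin 4))) := by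
  have a1 : H.Adj 0 1 := h0 1 (by decide)
  have a2 : H.Adj 0 2 := h0 2 (by decide)
  have a3 : H.Adj 0 3 := h0 3 (by decide)
  have b1 : H.Adj 1 0 := a1.symm
  have b2 : H.Adj 2 0 := a2.symm
  have b3 : H.Adj 3 0 := a3.symm
  by_cases p12 : H.Adj 1 2 <;> by_cases p13 : H.Adj 1 3 <;> by_cases p23 : H.Adj 2 3
  · -- all: K4
    have s21 : H.Adj 2 1 := p12.symm
    have s31 : H.Adj 3 1 := p13.symm
    have s32 : H.Adj 3 2 := p23.symm
    refine Or.inr (Or.inr (Or.inr (iso_nonempty_of_pointwise (Equiv.refl _) ?_)))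
    intro a b
    fin_cases a <;> fin_cases b <;>
      first
        | exact iff_of_true (by decide) (by assumption)
        | exact iff_of_false (by decide) (by assumption)
        | exact iff_of_false (by decide) (H.loopless.irrefl _)
  · -- 12, 13 : diamond, refl
    have s21 : H.Adj 2 1 := p12.symm
    have s31 : H.Adj 3 1 := p13.symm
    have n32 : ¬ H.Adj 3 2 := fun h => p23 h.symm
    refine Or.inr (Or.inr (Or.inl (iso_nonempty_of_pointwise (Equiv.refl _) ?_)))
    intro a b
    fin_cases a <;> fin_cases b <;>
      first
        | exact iff_of_true (by decide) (by assumption)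
        | exact iff_of_false (by decide) (by assumption)
        | exact iff_of_false (by decide) (H.loopless.irrefl _)
  · -- 12, 23 : diamond, swap 1 2
    have s21 : H.Adj 2 1 := p12.symm
    have n31 : ¬ H.Adj 3 1 := fun h => p13 h.symm
    have s32 : H.Adj 3 2 := p23.symm
    refine Or.inr (Or.inr (Or.inl (iso_nonempty_of_pointwise (Equiv.swap 1 2) ?_)))
    intro a b
    fin_cases a <;> fin_cases b <;>
      first
        | exact iff_of_true (by decide) (by assumption)
        | exact iff_of_false (by decide) (by assumption)
        | exact iff_of_false (by decide) (H.loopless.irrefl _)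
  · -- only 12 : paw, refl
    have s21 : H.Adj 2 1 := p12.symm
    have n31 : ¬ H.Adj 3 1 := fun h => p13 h.symm
    have n32 : ¬ H.Adj 3 2 := fun h => p23 h.symm
    refine Or.inr (Or.inl (iso_nonempty_of_pointwise (Equiv.refl _) ?_))
    intro a b
    fin_cases a <;> fin_cases b <;>
      first
        | exact iff_of_true (by decide) (by assumption)
        | exact iff_of_false (by decide) (by assumption)
        | exact iff_of_false (by decide) (H.loopless.irrefl _)
  · -- 13, 23 : diamond, swap 1 3
    have n21 : ¬ H.Adj 2 1 := fun h => p12 h.symm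
    have s31 : H.Adj 3 1 := p13.symm
    have s32 : H.Adj 3 2 := p23.symm
    refine Or.inr (Or.inr (Or.inl (iso_nonempty_of_pointwise (Equiv.swap 1 3) ?_)))
    intro a b
    fin_cases a <;> fin_cases b <;>
      first
        | exact iff_of_true (by decide) (by assumption)
        | exact iff_of_false (by decide) (by assumption)
        | exact iff_of_false (by decide) (H.loopless.irrefl _)
  · -- only 13 : paw, swap 2 3
    have n21 : ¬ H.Adj 2 1 := fun h => p12 h.symm
    have s31 : H.Adj 3 1 := p13.symm
    have n32 : ¬ H.Adj 3 2 := fun h => p23 h.symm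
    refine Or.inr (Or.inl (iso_nonempty_of_pointwise (Equiv.swap 2 3) ?_))
    intro a b
    fin_cases a <;> fin_cases b <;>
      first
        | exact iff_of_true (by decide) (by assumption)
        | exact iff_of_false (by decide) (by assumption)
        | exact iff_of_false (by decide) (H.loopless.irrefl _)
  · -- only 23 : paw, swap 1 3
    have n21 : ¬ H.Adj 2 1 := fun h => p12 h.symm
    have n31 : ¬ H.Adj 3 1 := fun h => p13 h.symm
    have s32 : H.Adj 3 2 := p23.symm
    refine Or.inr (Or.inl (iso_nonempty_of_pointwise (Equiv.swap 1 3) ?_))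
    intro a b
    fin_cases a <;> fin_cases b <;>
      first
        | exact iff_of_true (by decide) (by assumption)
        | exact iff_of_false (by decide) (by assumption)
        | exact iff_of_false (by decide) (H.loopless.irrefl _)
  · -- none : star3
    have n21 : ¬ H.Adj 2 1 := fun h => p12 h.symm
    have n31 : ¬ H.Adj 3 1 := fun h => p13 h.symm
    have n32 : ¬ H.Adj 3 2 := fun h => p23 h.symm
    refine Or.inl (iso_nonempty_of_pointwise (Equiv.refl _) ?_)
    intro a b
    fin_cases a <;> fin_cases b <;>
      first
        | exact iff_of_true (by decide) (by assumption)
        | exact iff_of_false (by decide) (by assumption)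
        | exact iff_of_false (by decide) (H.loopless.irrefl _)

lemma exists_iso_of_dom (H : SimpleGraph (Fin 4)) [DecidableRel H.Adj] {v : Fin 4}
    (hv : ∀ w, w ≠ v → H.Adj v w) :
    Nonempty (H ≃g star3) ∨ Nonempty (H ≃g paw) ∨ Nonempty (H ≃g diamond) ∨
      Nonempty (H ≃g (⊤ : SimpleGraph (Fin 4))) := by
  set σ := Equiv.swap (0 : Fin 4) v with hσ
  have ι : H.comap σ.toEmbedding ≃g H := Iso.comap σ H
  haveI : DecidableRel (H.comap σ.toEmbedding).Adj := fun a b =>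
    inferInstanceAs (Decidable (H.Adj _ _))
  have h0 : ∀ w, w ≠ 0 → (H.comap σ.toEmbedding).Adj 0 w := by
    intro w hw
    show H.Adj (σ 0) (σ w)
    rw [Equiv.swap_apply_left]
    apply hv
    intro h
    exact hw (σ.injective (h.trans (Equiv.swap_apply_left 0 v).symm))
  rcases exists_iso_of_dom0 _ h0 with h|h|h|h
  · exact Or.inl ⟨ι.symm.trans h.some⟩
  · exact Or.inr (Or.inl ⟨ι.symm.trans h.some⟩)
  · exact Or.inr (Or.inr (Or.inl ⟨ι.symm.trans h.some⟩))
  · exact Or.inr (Or.inr (Or.inr ⟨ι.symm.trans h.some⟩))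

open Classical in
lemma key_fin4 (H : SimpleGraph (Fin 4)) [DecidableRel H.Adj] :
    domCount H
      = (if Nonempty (H ≃g star3) then 1 else 0) + (if Nonempty (H ≃g paw) then 1 else 0)
        + 2 * (if Nonempty (H ≃g diamond) then 1 else 0)
        + 4 * (if Nonempty (H ≃g (⊤ : SimpleGraph (Fin 4))) then 1 else 0) := by
  have hes : Nonempty (H ≃g star3) → #H.edgeFinset = 3 := fun h =>
    h.some.card_edgeFinset_eq.trans edge_star3
  have hep : Nonempty (H ≃g paw) → #H.edgeFinset = 4 := fun h =>
    h.some.card_edgeFinset_eq.trans edge_paw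
  have hed : Nonempty (H ≃g diamond) → #H.edgeFinset = 5 := fun h =>
    h.some.card_edgeFinset_eq.trans edge_diamond
  have het : Nonempty (H ≃g (⊤ : SimpleGraph (Fin 4))) → #H.edgeFinset = 6 := fun h =>
    h.some.card_edgeFinset_eq.trans edge_top
  by_cases hs : Nonempty (H ≃g star3)
  · have np : ¬ Nonempty (H ≃g paw) := fun h => by have := hes hs; have := hep h; omega
    have nd : ¬ Nonempty (H ≃g diamond) := fun h => by have := hes hs; have := hed h; omega
    have nt : ¬ Nonempty (H ≃g (⊤ : SimpleGraph (Fin 4))) := fun h => by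
      have := hes hs; have := het h; omega
    rw [domCount_congr hs.some, domCount_star3, if_pos hs, if_neg np, if_neg nd, if_neg nt]
  by_cases hp : Nonempty (H ≃g paw)
  · have nd : ¬ Nonempty (H ≃g diamond) := fun h => by have := hep hp; have := hed h; omega
    have nt : ¬ Nonempty (H ≃g (⊤ : SimpleGraph (Fin 4))) := fun h => by
      have := hep hp; have := het h; omega
    rw [domCount_congr hp.some, domCount_paw, if_pos hp, if_neg hs, if_neg nd, if_neg nt]
  by_cases hd : Nonempty (H ≃g diamond)
  · have nt : ¬ Nonempty (H ≃g (⊤ : SimpleGraph (Fin 4))) := fun h => by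
      have := hed hd; have := het h; omega
    rw [domCount_congr hd.some, domCount_diamond, if_pos hd, if_neg hs, if_neg hp, if_neg nt]
  by_cases ht : Nonempty (H ≃g (⊤ : SimpleGraph (Fin 4)))
  · rw [domCount_congr ht.some, domCount_top, if_pos ht, if_neg hs, if_neg hp, if_neg hd]
  · rw [if_neg hs, if_neg hp, if_neg hd, if_neg ht]
    by_contra hne
    have hne' : domCount H ≠ 0 := by simpa using hne
    rw [domCount] at hne'
    obtain ⟨v, hv⟩ := card_pos.mp (Nat.pos_of_ne_zero hne')
    simp only [mem_filter, mem_univ, true_and] at hv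
    rcases exists_iso_of_dom H hv with h|h|h|h
    exacts [hs h, hp h, hd h, ht h]

open Classical in
lemma keyQ {V : Type*} [Fintype V] [DecidableEq V] (G : SimpleGraph V) [DecidableRel G.Adj]
    (Q : Finset V) (hQ : Q.card = 4) :
    (Q.filter (fun v => ∀ w ∈ Q, w ≠ v → G.Adj v w)).card
      = (if Nonempty (G.induce (Q : Set V) ≃g star3) then 1 else 0)
        + (if Nonempty (G.induce (Q : Set V) ≃g paw) then 1 else 0)
        + 2 * (if Nonempty (G.induce (Q : Set V) ≃g diamond) then 1 else 0)
        + 4 * (if Nonempty (G.induce (Q : Set V) ≃g (⊤ : SimpleGraph (Fin 4))) then 1 else 0) := by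
  have e' : ((Q : Set V) : Type _) ≃ Fin 4 := Q.equivFinOfCardEq hQ
  set H := (G.induce (Q : Set V)).comap e'.symm.toEmbedding with hH
  haveI : DecidableRel H.Adj := Classical.decRel _
  have ι : H ≃g G.induce (Q : Set V) := Iso.comap e'.symm (G.induce _)
  have hiso : ∀ M : SimpleGraph (Fin 4),
      Nonempty (G.induce (Q : Set V) ≃g M) ↔ Nonempty (H ≃g M) :=
    fun M => ⟨fun ⟨f⟩ => ⟨ι.trans f⟩, fun ⟨f⟩ => ⟨ι.symm.trans f⟩⟩
  have hadj : ∀ a b : Fin 4, H.Adj a b ↔ G.Adj ↑(e'.symm a) ↑(e'.symm b) := fun a b => Iff.rfl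
  have hdc : (Q.filter (fun v => ∀ w ∈ Q, w ≠ v → G.Adj v w)).card = domCount H := by
    rw [domCount]
    refine Finset.card_bij'
      (i := fun v hv => e' ⟨v, by
        simpa using (Finset.mem_filter.mp hv).1⟩)
      (j := fun i _ => ↑(e'.symm i)) ?hi ?hj ?li ?ri
    case hi =>
      intro v hv
      obtain ⟨hvQ, hdom⟩ := Finset.mem_filter.mp hv
      simp only [mem_filter, mem_univ, true_and]
      intro j hj
      rw [hadj, Equiv.symm_apply_apply]
      refine hdom _ (e'.symm j).2 ?_
      intro h
      apply hj
      have : e'.symm j = ⟨v, by simpa using hvQ⟩ := Subtype.ext h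
      rw [← this, Equiv.apply_symm_apply]
    case hj =>
      intro i hi
      simp only [mem_filter, mem_univ, true_and] at hi
      rw [Finset.mem_filter]
      refine ⟨(e'.symm i).2, ?_⟩
      intro w hwQ hwv
      have hj : e' ⟨w, by simpa using hwQ⟩ ≠ i := by
        intro h
        apply hwv
        have := congrArg e'.symm h
        rw [Equiv.symm_apply_apply] at this
        exact congrArg Subtype.val this
      have := (hadj _ _).mp (hi _ hj)
      rwa [Equiv.symm_apply_apply] at this
    case li => intro v hv; simp
    case ri => intro i _; simp
  rw [hdc, key_fin4, hiso star3, hiso paw, hiso diamond, hiso ⊤]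

lemma step1 {V : Type*} [Fintype V] [DecidableEq V] (G : SimpleGraph V) [DecidableRel G.Adj] :
    ∑ v, (G.degree v).choose 3
      = ∑ Q ∈ Finset.univ.powersetCard 4,
          (Q.filter (fun v => ∀ w ∈ Q, w ≠ v → G.Adj v w)).card := by
  have lhs : ∑ v, (G.degree v).choose 3
      = (Finset.univ.sigma (fun v : V => (G.neighborFinset v).powersetCard 3)).card := by
    rw [Finset.card_sigma]
    refine Finset.sum_congr rfl fun v _ => ?_
    rw [Finset.card_powersetCard, card_neighborFinset_eq_degree]
  have rhs : (∑ Q ∈ Finset.univ.powersetCard 4,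
        (Q.filter (fun v => ∀ w ∈ Q, w ≠ v → G.Adj v w)).card)
      = ((Finset.univ.powersetCard 4).sigma
          (fun Q => Q.filter (fun v => ∀ w ∈ Q, w ≠ v → G.Adj v w))).card :=
    (Finset.card_sigma _ _).symm
  rw [lhs, rhs]
  refine Finset.card_bij'
    (i := fun p _ => (⟨insert p.1 p.2, p.1⟩ : Σ _ : Finset V, V))
    (j := fun q _ => (⟨q.2, q.1.erase q.2⟩ : Σ _ : V, Finset V)) ?hi ?hj ?li ?ri
  case hi =>
    rintro ⟨v, S⟩ hp
    rw [Finset.mem_sigma] at hp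
    obtain ⟨-, hS⟩ := hp
    rw [Finset.mem_powersetCard] at hS
    have hvS : v ∉ S := fun h => G.loopless.irrefl v ((G.mem_neighborFinset _ _).mp (hS.1 h))
    rw [Finset.mem_sigma]
    constructor
    · rw [Finset.mem_powersetCard_univ, Finset.card_insert_of_notMem hvS, hS.2]
    · rw [Finset.mem_filter]
      refine ⟨Finset.mem_insert_self _ _, ?_⟩
      intro w hw hwv
      rcases Finset.mem_insert.mp hw with h | h
      · exact absurd h hwv
      · exact (G.mem_neighborFinset _ _).mp (hS.1 h)
  case hj =>
    rintro ⟨Q, v⟩ hq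
    rw [Finset.mem_sigma] at hq
    obtain ⟨hQ, hv⟩ := hq
    rw [Finset.mem_powersetCard_univ] at hQ
    rw [Finset.mem_filter] at hv
    rw [Finset.mem_sigma]
    refine ⟨Finset.mem_univ _, ?_⟩
    rw [Finset.mem_powersetCard]
    constructor
    · intro w hw
      rw [Finset.mem_erase] at hw
      exact (G.mem_neighborFinset _ _).mpr (hv.2 _ hw.2 hw.1)
    · rw [Finset.card_erase_of_mem hv.1, hQ]
  case li =>
    rintro ⟨v, S⟩ hp
    rw [Finset.mem_sigma] at hp
    obtain ⟨-, hS⟩ := hp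
    rw [Finset.mem_powersetCard] at hS
    have hvS : v ∉ S := fun h => G.loopless.irrefl v ((G.mem_neighborFinset _ _).mp (hS.1 h))
    simp [Finset.erase_insert hvS]
  case ri =>
    rintro ⟨Q, v⟩ hq
    rw [Finset.mem_sigma] at hq
    obtain ⟨-, hv⟩ := hq
    rw [Finset.mem_filter] at hv
    simp [Finset.insert_erase hv.1]

open Classical in
lemma inducedCount_eq {V : Type*} [Fintype V] [DecidableEq V] (G : SimpleGraph V)
    (M : SimpleGraph (Fin 4)) :
    inducedCount G M = ∑ Q ∈ (Finset.univ : Finset V).powersetCard 4,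
      (if Nonempty (G.induce (Q : Set V) ≃g M) then 1 else 0) := by
  rw [inducedCount, Nat.card_eq_fintype_card, Fintype.card_subtype]
  rw [Finset.card_filter]
  rw [show (Finset.univ : Finset V).powersetCard 4
      = Finset.univ.filter (fun Q : Finset V => Q.card = 4) by
    rw [Finset.powersetCard_eq_filter, Finset.powerset_univ]]
  rw [Finset.sum_filter]
  refine Finset.sum_congr rfl fun Q _ => ?_
  rw [ite_and]


/-- `∑ᵥ C(dᵥ,3) = n₂ + n₄ + 2 n₅ + 4 n₆`, where `n₂, n₄, n₅, n₆` count induced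
4-node subgraphs isomorphic to the 3-star, the paw, the diamond and `K₄`. -/
theorem threeStar_count_decomposition {V : Type*} [Fintype V] [DecidableEq V]
    (G : SimpleGraph V) [DecidableRel G.Adj] :
    ∑ v, (G.degree v).choose 3
      = inducedCount G star3 + inducedCount G paw
        + 2 * inducedCount G diamond + 4 * inducedCount G (⊤ : SimpleGraph (Fin 4)) := by
  classical
  rw [step1 G, inducedCount_eq G star3, inducedCount_eq G paw, inducedCount_eq G diamond,
    inducedCount_eq G (⊤ : SimpleGraph (Fin 4)), Finset.mul_sum, Finset.mul_sum,
    ← Finset.sum_add_distrib, ← Finset.sum_add_distrib, ← Finset.sum_add_distrib]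
  exact Finset.sum_congr rfl fun Q hQ => keyQ G Q (Finset.mem_powersetCard_univ.mp hQ)
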